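/- Assume the Coxeter graph of m is connected. Let 𝔅 be the group presented by generators 𝗋_{ij}, one for each edge (ij) (i < j) of the Coxeter graph, together with 𝗍_0,…,𝗍_{n−1}; writing 𝗋_{ji} := 𝗋_{ij}^{−1}, the relations are: (1) 𝗋_{i i_1}𝗋_{i_1 i_2}⋯𝗋_{i_a i} = 1 for every closed path (i, i_1, …, i_a, i) along edges of the Coxeter graph; (2) 𝗋_{ij}𝗋_{jk}𝗍_k = 𝗋_{kj}𝗋_{ji}𝗍_i and 𝗍_k𝗋_{ij}𝗋_{jk} = 𝗋_{kj}𝗋_{ji}𝗍_i whenever (ij) and (jk) are edges, i < k and m_{ik} = 2; (3) 𝗋_{ij}𝗋_{jk}𝗋_{kl}𝗍_l = 𝗋_{lk}𝗋_{kj}𝗋_{ji}𝗍_i and 𝗍_l𝗋_{ij}𝗋_{jk}𝗋_{kl} = 𝗋_{lk}𝗋_{kj}𝗋_{ji}𝗍_i whenever (ij), (jk), (kl) are edges, i < l and m_{il} = 2; (4) (𝗋_{ij}𝗍_j)^{m_{ij}/2} = (𝗋_{ji}𝗍_i)^{m_{ij}/2} and (𝗍_j𝗋_{ij})^{m_{ij}/2}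 = (𝗋_{ji}𝗍_i)^{m_{ij}/2} for each edge with m_{ij} finite, even and > 2; (5) (𝗋_{ij}𝗍_j)^{(m_{ij}−1)/2}𝗋_{ij} = (𝗋_{ji}𝗍_i)^{(m_{ij}−1)/2} and (𝗋_{ij}𝗍_j)^{(m_{ij}+1)/2} = 𝗍_i(𝗋_{ji}𝗍_i)^{(m_{ij}−1)/2} for each edge with m_{ij} finite and odd; (6) 𝗋_{ij}𝗋_{lm} = 𝗋_{lm}𝗋_{ij} whenever the edges (ij) and (lm) are not connected. Then the assignment 𝗍_i ↦ g_i² (i = 0,…,n−1) and 𝗋_{ij} ↦ g_i g_j^{−1} (for each edge) extends to a group isomorphism from 𝔅 onto the alternating subgroup 𝓑⁺ of the braid group 𝓑. -/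

import Mathlib

/-- `altProd a b k` is the alternating product `a * b * a * b * ⋯` with `k` factors. -/
def altProd {M : Type*} [Monoid M] (a b : M) : ℕ → M
  | 0 => 1
  | k + 1 => a * altProd b a k

lemma map_altProd {M N : Type*} [Monoid M] [Monoid N] (f : M →* N) (a b : M) :
    ∀ k, f (altProd a b k) = altProd (f a) (f b) k
  | 0 => by simp [altProd]
  | k + 1 => by simp [altProd, map_mul, map_altProd f b a k]

lemma altProd_self {M : Type*} [Monoid M] (a : M) : ∀ k, altProd a a k = a ^ k
  | 0 => by simp [altProd]
  | k + 1 => by rw [altProd, altProd_self a k, ← pow_succ']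

section Braid
variable {n : ℕ}

/-- The braid relations of a Coxeter matrix (entry `0` encodes `∞`, and the
corresponding relation is omitted). -/
def braidRels (M : CoxeterMatrix (Fin n)) : Set (FreeGroup (Fin n)) :=
  { x | ∃ i j : Fin n, i < j ∧ M i j ≠ 0 ∧
      x = altProd (FreeGroup.of i) (FreeGroup.of j) (M i j) *
        (altProd (FreeGroup.of j) (FreeGroup.of i) (M i j))⁻¹ }

/-- The braid group of a Coxeter matrix. -/
def BraidGroup (M : CoxeterMatrix (Fin n)) : Type _ := PresentedGroup (braidRels M)

instance (M : CoxeterMatrix (Fin n)) : Group (BraidGroup M) :=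
  inferInstanceAs (Group (PresentedGroup (braidRels M)))

/-- The generators `g i` of the braid group. -/
def braidGen (M : CoxeterMatrix (Fin n)) (i : Fin n) : BraidGroup M := PresentedGroup.of i

/-- The sign character of the braid group, sending each generator to `-1`. -/
def braidSign (M : CoxeterMatrix (Fin n)) : BraidGroup M →* ℤˣ :=
  PresentedGroup.toGroup (f := fun _ : Fin n => (-1 : ℤˣ)) (by
    rintro x ⟨i, j, hij, hm, rfl⟩
    simp [map_altProd, altProd_self])

/-- The alternating subgroup of the braid group: the kernel of the sign character. -/
def braidAlt (M : CoxeterMatrix (Fin n)) : Subgroup (BraidGroup M) := (braidSign M).ker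

/-- Adjacency in the Coxeter graph: `i ≠ j` and `m_{ij} ≥ 3` (including `m_{ij} = ∞`,
encoded as `0`); equivalently `m_{ij} ≠ 2`. -/
def coxAdj (M : CoxeterMatrix (Fin n)) (i j : Fin n) : Prop := i ≠ j ∧ M i j ≠ 2

/-- The edges `(ij)`, `i < j`, of the Coxeter graph of `M`. -/
def CoxEdge (M : CoxeterMatrix (Fin n)) : Type _ :=
  { p : Fin n × Fin n // p.1 < p.2 ∧ M p.1 p.2 ≠ 2 }

/-- Generators of the edge presentation: one generator `𝗋` for each edge, and one
generator `𝗍_i` for each vertex `i`. -/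
def BethGen (M : CoxeterMatrix (Fin n)) : Type _ := CoxEdge M ⊕ Fin n

/-- The word `𝗋_{ij}` in the free group: the generator of the edge `(ij)` if `i < j`, the
inverse of the generator of the edge `(ji)` if `j < i` (junk value `1` if not an edge). -/
def rW (M : CoxeterMatrix (Fin n)) (i j : Fin n) : FreeGroup (BethGen M) :=
  if h : i < j ∧ M i j ≠ 2 then FreeGroup.of (Sum.inl ⟨(i, j), h⟩)
  else if h' : j < i ∧ M j i ≠ 2 then (FreeGroup.of (Sum.inl ⟨(j, i), h'⟩))⁻¹
  else 1

/-- The word `𝗍_i` in the free group. -/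
def tW (M : CoxeterMatrix (Fin n)) (i : Fin n) : FreeGroup (BethGen M) :=
  FreeGroup.of (Sum.inr i)

/-- The product `𝗋_{i i₁} 𝗋_{i₁ i₂} ⋯` along a path given by a starting vertex and the list
of subsequent vertices. -/
def pathW (M : CoxeterMatrix (Fin n)) : Fin n → List (Fin n) → FreeGroup (BethGen M)
  | _, [] => 1
  | i, j :: l => rW M i j * pathW M j l

/-- The defining relators of the edge presentation `𝔅` of the alternating subgroup of the
braid group (each relation `w₁ = w₂` is encoded by the relator `w₁ * w₂⁻¹`). -/
inductive BethRel (M : CoxeterMatrix (Fin n)) : FreeGroup (BethGen M) → Prop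
  | cycle (i : Fin n) (l : List (Fin n)) (h : List.Chain (coxAdj M) i (l ++ [i])) :
      BethRel M (pathW M i (l ++ [i]))
  | two_left (i j k : Fin n) (hij : coxAdj M i j) (hjk : coxAdj M j k)
      (hik : i < k) (h2 : M i k = 2) :
      BethRel M (rW M i j * rW M j k * tW M k * (rW M k j * rW M j i * tW M i)⁻¹)
  | two_right (i j k : Fin n) (hij : coxAdj M i j) (hjk : coxAdj M j k)
      (hik : i < k) (h2 : M i k = 2) :
      BethRel M (tW M k * rW M i j * rW M j k * (rW M k j * rW M j i * tW M i)⁻¹)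
  | three_left (i j k l : Fin n) (hij : coxAdj M i j) (hjk : coxAdj M j k)
      (hkl : coxAdj M k l) (hil : i < l) (h2 : M i l = 2) :
      BethRel M (rW M i j * rW M j k * rW M k l * tW M l *
        (rW M l k * rW M k j * rW M j i * tW M i)⁻¹)
  | three_right (i j k l : Fin n) (hij : coxAdj M i j) (hjk : coxAdj M j k)
      (hkl : coxAdj M k l) (hil : i < l) (h2 : M i l = 2) :
      BethRel M (tW M l * rW M i j * rW M j k * rW M k l *
        (rW M l k * rW M k j * rW M j i * tW M i)⁻¹)
  | even_left (i j : Fin n) (hij : i < j) (h2 : 2 < M i j) (he : M i j % 2 = 0) :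
      BethRel M ((rW M i j * tW M j) ^ (M i j / 2) * ((rW M j i * tW M i) ^ (M i j / 2))⁻¹)
  | even_right (i j : Fin n) (hij : i < j) (h2 : 2 < M i j) (he : M i j % 2 = 0) :
      BethRel M ((tW M j * rW M i j) ^ (M i j / 2) * ((rW M j i * tW M i) ^ (M i j / 2))⁻¹)
  | odd_left (i j : Fin n) (hij : i < j) (hadj : M i j ≠ 2) (ho : M i j % 2 = 1) :
      BethRel M ((rW M i j * tW M j) ^ ((M i j - 1) / 2) * rW M i j *
        (((rW M j i * tW M i) ^ ((M i j - 1) / 2))⁻¹))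
  | odd_right (i j : Fin n) (hij : i < j) (hadj : M i j ≠ 2) (ho : M i j % 2 = 1) :
      BethRel M ((rW M i j * tW M j) ^ ((M i j + 1) / 2) *
        ((tW M i * (rW M j i * tW M i) ^ ((M i j - 1) / 2))⁻¹))
  | comm (e e' : CoxEdge M)
      (h11 : M e.1.1 e'.1.1 = 2) (h12 : M e.1.1 e'.1.2 = 2)
      (h21 : M e.1.2 e'.1.1 = 2) (h22 : M e.1.2 e'.1.2 = 2)
      (d11 : e.1.1 ≠ e'.1.1) (d12 : e.1.1 ≠ e'.1.2)
      (d21 : e.1.2 ≠ e'.1.1) (d22 : e.1.2 ≠ e'.1.2) :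
      BethRel M (FreeGroup.of (Sum.inl e) * FreeGroup.of (Sum.inl e') *
        (FreeGroup.of (Sum.inl e') * FreeGroup.of (Sum.inl e))⁻¹)

end Braid

namespace AltBraidProof

attribute [local instance 10] Classical.propDecidable

theorem shift_pow {G : Type*} [Monoid G] (x y : G) : ∀ k, x * (y * x) ^ k = (x * y) ^ k * x
  | 0 => by simp
  | k+1 => by
      rw [pow_succ, ← mul_assoc, shift_pow x y k, pow_succ]
      simp [mul_assoc]

lemma altProd_add_two {G : Type*} [Monoid G] (a b : G) (k : ℕ) :
    altProd a b (k+2) = a * (b * altProd a b k) := rfl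

lemma altProd_two_mul {G : Type*} [Monoid G] (a b : G) : ∀ q, altProd a b (2*q) = (a*b)^q
  | 0 => by simp [altProd]
  | q+1 => by
      have : 2*(q+1) = (2*q)+2 := by ring
      rw [this, altProd_add_two, altProd_two_mul a b q, pow_succ', mul_assoc]

lemma altProd_two_mul_add_one {G : Type*} [Monoid G] (a b : G) :
    ∀ q, altProd a b (2*q+1) = (a*b)^q * a
  | 0 => by simp [altProd]
  | q+1 => by
      have : 2*(q+1)+1 = (2*q+1)+2 := by ring
      rw [this, altProd_add_two, altProd_two_mul_add_one a b q, pow_succ', mul_assoc, mul_assoc]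

variable {n : ℕ} (M : CoxeterMatrix (Fin n))

lemma braid_mk_rel {i j : Fin n} (hij : i < j) (hm : M i j ≠ 0) :
    altProd (braidGen M i) (braidGen M j) (M i j)
      = altProd (braidGen M j) (braidGen M i) (M i j) := by
  have h1 : PresentedGroup.mk (braidRels M)
      (altProd (FreeGroup.of i) (FreeGroup.of j) (M i j) *
        (altProd (FreeGroup.of j) (FreeGroup.of i) (M i j))⁻¹) = 1 := by
    apply (QuotientGroup.eq_one_iff _).2
    exact Subgroup.subset_normalClosure ⟨i, j, hij, hm, rfl⟩
  rw [map_mul, map_inv, map_altProd, map_altProd, mul_inv_eq_one] at h1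
  exact h1

lemma ne_of_eq_two {i j : Fin n} (h : M i j = 2) : i ≠ j := by
  intro hh; subst hh; rw [M.diagonal] at h; exact absurd h (by norm_num)

lemma braid_comm {i j : Fin n} (h : M i j = 2) :
    Commute (braidGen M i) (braidGen M j) := by
  have hne := ne_of_eq_two M h
  rcases lt_or_gt_of_ne hne with hlt | hgt
  · have := braid_mk_rel M hlt (by rw [h]; norm_num)
    rw [h] at this
    simpa [altProd, Commute, SemiconjBy, mul_assoc] using this
  · have h' : M j i = 2 := by rw [M.symmetric]; exact h
    have := braid_mk_rel M hgt (by rw [h']; norm_num)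
    rw [h'] at this
    symm
    simpa [altProd, Commute, SemiconjBy, mul_assoc] using this

/-! ### The edge presentation group -/

abbrev P := PresentedGroup { x | BethRel M x }

abbrev pmk : FreeGroup (BethGen M) →* P M := PresentedGroup.mk _

lemma pmk_rel {w : FreeGroup (BethGen M)} (h : BethRel M w) : pmk M w = 1 := by
  apply (QuotientGroup.eq_one_iff _).2
  exact Subgroup.subset_normalClosure h

/-- `𝗍_i` in `P`. -/
def tP (i : Fin n) : P M := pmk M (tW M i)

/-- `𝗋_{ij}` in `P`. -/
def RP (i j : Fin n) : P M := pmk M (rW M i j)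

lemma coxAdj_symm {i j : Fin n} (h : coxAdj M i j) : coxAdj M j i :=
  ⟨h.1.symm, by rw [M.symmetric]; exact h.2⟩

lemma rW_symm (i j : Fin n) : rW M j i = (rW M i j)⁻¹ := by
  unfold rW
  by_cases h1 : i < j ∧ M i j ≠ 2
  · rw [dif_neg (fun hh => absurd hh.1 (asymm h1.1)), dif_pos h1, dif_pos h1]
  · by_cases h2 : j < i ∧ M j i ≠ 2
    · rw [dif_pos h2, dif_neg h1, dif_pos h2, inv_inv]
    · simp [h1, h2]



lemma RP_symm (i j : Fin n) : RP M j i = (RP M i j)⁻¹ := by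
  rw [RP, RP, rW_symm, map_inv]

/-! ### Chains in the Coxeter graph -/


/-- Chains (paths) in the Coxeter graph from `i` to `j`. -/
inductive CP : Fin n → Fin n → Type where
  | nil (i : Fin n) : CP i i
  | cons {i k j : Fin n} (h : coxAdj M i k) (p : CP k j) : CP i j

namespace CP

variable {m : CoxeterMatrix (Fin n)}

def word : ∀ {i j : Fin n}, CP m i j → FreeGroup (BethGen m)
  | _, _, .nil _ => 1
  | _, _, .cons (i := i) (k := k) _ p => rW m i k * word p

def wordP {i j : Fin n} (p : CP m i j) : P m := pmk m p.word

def append : ∀ {i j k : Fin n}, CP m i j → CP m j k → CP m i k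
  | _, _, _, .nil _, q => q
  | _, _, _, .cons h p, q => .cons h (append p q)

lemma word_append {i j k : Fin n} (p : CP m i j) (q : CP m j k) :
    (p.append q).word = p.word * q.word := by
  induction p with
  | nil => simp [append, word]
  | cons h p ih => simp [append, word, ih, mul_assoc]

def single {i j : Fin n} (h : coxAdj m i j) : CP m i j := .cons h (.nil j)

lemma word_single {i j : Fin n} (h : coxAdj m i j) : (single h).word = rW m i j := by
  simp [single, word]

def reverse : ∀ {i j : Fin n}, CP m i j → CP m j i
  | _, _, .nil _ => .nil _
  | _, _, .cons h p => (reverse p).append (single (coxAdj_symm m h))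

lemma word_reverse {i j : Fin n} (p : CP m i j) : p.reverse.word = (p.word)⁻¹ := by
  induction p with
  | nil => simp [reverse, word]
  | cons h p ih =>
      rw [reverse, word_append, ih, word_single, rW_symm]
      simp [word, mul_comm]

def toList : ∀ {i j : Fin n}, CP m i j → List (Fin n)
  | _, _, .nil _ => []
  | _, _, .cons (k := k) _ p => k :: toList p

lemma chain_toList {i j : Fin n} (p : CP m i j) : List.Chain (coxAdj m) i p.toList := by
  induction p with
  | nil => exact List.Chain.nil
  | cons h p ih => exact List.Chain.cons h ih

lemma word_eq_pathW {i j : Fin n} (p : CP m i j) : p.word = pathW m i p.toList := by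
  induction p with
  | nil => simp [toList, word, pathW]
  | cons h p ih => simp [toList, word, pathW, ih]

lemma getLast_toList {i j : Fin n} (p : CP m i j) :
    (i :: p.toList).getLast (List.cons_ne_nil _ _) = j := by
  induction p with
  | nil => simp [toList]
  | cons h p ih =>
      rw [toList, List.getLast_cons (List.cons_ne_nil _ _)]
      exact ih

lemma wordP_closed {i : Fin n} (p : CP m i i) : p.wordP = 1 := by
  rcases hl : p.toList with _ | ⟨a, l'⟩
  · have : p.word = 1 := by rw [word_eq_pathW, hl]; rfl
    rw [wordP, this, map_one]
  · have hne : p.toList ≠ [] := by rw [hl]; exact List.cons_ne_nil _ _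
    have hlast : (p.toList).getLast hne = i := by
      have := getLast_toList p
      rwa [List.getLast_cons hne] at this
    have hsplit : p.toList = p.toList.dropLast ++ [i] := by
      conv_lhs => rw [← List.dropLast_append_getLast hne]
      rw [hlast]
    have hch : List.Chain (coxAdj m) i (p.toList.dropLast ++ [i]) := by
      have := chain_toList p
      rwa [hsplit] at this
    have hrel := pmk_rel m (BethRel.cycle i p.toList.dropLast hch)
    rw [wordP, word_eq_pathW, hsplit]
    exact hrel

lemma wordP_eq {i j : Fin n} (p q : CP m i j) : p.wordP = q.wordP := by
  have h := wordP_closed (p.append q.reverse)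
  rw [wordP, word_append, word_reverse, map_mul, map_inv] at h
  exact mul_inv_eq_one.mp h

lemma wordP_append {i j k : Fin n} (p : CP m i j) (q : CP m j k) :
    (p.append q).wordP = p.wordP * q.wordP := by
  rw [wordP, word_append, map_mul]; rfl

def len : ∀ {i j : Fin n}, CP m i j → ℕ
  | _, _, .nil _ => 0
  | _, _, .cons _ p => len p + 1

lemma len_append {i j k : Fin n} (p : CP m i j) (q : CP m j k) :
    (p.append q).len = p.len + q.len := by
  induction p with
  | nil => simp [append, len]
  | cons h p ih => simp [append, len, ih]; omega

lemma len_reverse {i j : Fin n} (p : CP m i j) : p.reverse.len = p.len := by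
  induction p with
  | nil => simp [reverse, len]
  | cons h p ih => simp [reverse, len_append, ih, len, single]

lemma eq_of_len_zero : ∀ {i j : Fin n} (p : CP m i j), p.len = 0 → i = j
  | _, _, .nil _, _ => rfl
  | _, _, .cons _ p, h => by simp [len] at h

lemma adj_of_len_one : ∀ {i j : Fin n} (p : CP m i j), p.len = 1 → coxAdj m i j
  | _, _, .cons (k := k) hadj p, h => by
      have : p.len = 0 := by simp [len] at h; omega
      have := eq_of_len_zero p this
      subst this; exact hadj

end CP
section Connected

variable (hconn : ∀ i j : Fin n, Relation.ReflTransGen (coxAdj M) i j)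
include hconn

lemma nonempty_CP (i j : Fin n) : Nonempty (CP M i j) := by
  induction hconn i j with
  | refl => exact ⟨.nil i⟩
  | tail h1 h2 ih => exact ⟨ih.some.append (CP.single h2)⟩

noncomputable def cpOf (i j : Fin n) : CP M i j := (nonempty_CP M hconn i j).some

/-- The canonical path word from `i` to `j` in `P`. -/
noncomputable def rho (i j : Fin n) : P M := (cpOf M hconn i j).wordP

lemma rho_eq {i j : Fin n} (p : CP M i j) : rho M hconn i j = p.wordP :=
  CP.wordP_eq _ p

lemma rho_mul (i j k : Fin n) :
    rho M hconn i j * rho M hconn j k = rho M hconn i k := by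
  rw [rho_eq M hconn ((cpOf M hconn i j).append (cpOf M hconn j k)), CP.wordP_append]
  rfl

lemma rho_symm (i j : Fin n) : rho M hconn j i = (rho M hconn i j)⁻¹ := by
  rw [rho_eq M hconn (cpOf M hconn i j).reverse, CP.wordP, CP.word_reverse, map_inv]
  rfl

lemma rho_self (i : Fin n) : rho M hconn i i = 1 := by
  rw [rho_eq M hconn (.nil i)]; rfl

lemma rho_edge {i j : Fin n} (h : coxAdj M i j) : rho M hconn i j = RP M i j := by
  rw [rho_eq M hconn (CP.single h), CP.wordP, CP.word_single]; rfl

/-- Graph distance. -/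
noncomputable def dst (i j : Fin n) : ℕ :=
  Nat.find (⟨(cpOf M hconn i j).len, cpOf M hconn i j, rfl⟩ : ∃ s, ∃ p : CP M i j, p.len = s)

lemma dst_le {i j : Fin n} (p : CP M i j) : dst M hconn i j ≤ p.len := by
  unfold dst; exact Nat.find_min' _ ⟨p, rfl⟩

lemma exists_dst (i j : Fin n) : ∃ p : CP M i j, p.len = dst M hconn i j := by
  unfold dst; exact ⟨(Nat.find_spec (⟨(cpOf M hconn i j).len, cpOf M hconn i j, rfl⟩ : ∃ s, ∃ p : CP M i j, p.len = s)).choose, (Nat.find_spec (⟨(cpOf M hconn i j).len, cpOf M hconn i j, rfl⟩ : ∃ s, ∃ p : CP M i j, p.len = s)).choose_spec⟩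

lemma dst_self (i : Fin n) : dst M hconn i i = 0 :=
  Nat.le_zero.mp (dst_le M hconn (.nil i))

lemma eq_of_dst_zero {i j : Fin n} (h : dst M hconn i j = 0) : i = j := by
  obtain ⟨p, hp⟩ := exists_dst M hconn i j
  exact CP.eq_of_len_zero p (by omega)

lemma adj_of_dst_one {i j : Fin n} (h : dst M hconn i j = 1) : coxAdj M i j := by
  obtain ⟨p, hp⟩ := exists_dst M hconn i j
  exact CP.adj_of_len_one p (by omega)

lemma dst_comm (i j : Fin n) : dst M hconn i j = dst M hconn j i := by
  apply le_antisymm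
  · obtain ⟨p, hp⟩ := exists_dst M hconn j i
    calc dst M hconn i j ≤ p.reverse.len := dst_le M hconn p.reverse
    _ = _ := by rw [CP.len_reverse, hp]
  · obtain ⟨p, hp⟩ := exists_dst M hconn i j
    calc dst M hconn j i ≤ p.reverse.len := dst_le M hconn p.reverse
    _ = _ := by rw [CP.len_reverse, hp]

lemma M2_of_two_le_dst {i j : Fin n} (h : 2 ≤ dst M hconn i j) : M i j = 2 := by
  have hne : i ≠ j := by
    intro hh; subst hh; rw [dst_self] at h; omega
  by_contra hM
  have : dst M hconn i j ≤ 1 := by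
    have := dst_le M hconn (CP.single (⟨hne, hM⟩ : coxAdj M i j))
    simpa [CP.single, CP.len] using this
  omega

lemma dst_triangle (i j k : Fin n) :
    dst M hconn i k ≤ dst M hconn i j + dst M hconn j k := by
  obtain ⟨p, hp⟩ := exists_dst M hconn i j
  obtain ⟨q, hq⟩ := exists_dst M hconn j k
  calc dst M hconn i k ≤ (p.append q).len := dst_le M hconn _
  _ = _ := by rw [CP.len_append, hp, hq]

lemma dst_le_one_of_adj {i j : Fin n} (h : coxAdj M i j) : dst M hconn i j ≤ 1 := by
  have := dst_le M hconn (CP.single h)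
  simpa [CP.single, CP.len] using this

end Connected

/-! ### Relations in `P` -/

lemma commute_of_comm_rel {e e' : CoxEdge M}
    (h11 : M e.1.1 e'.1.1 = 2) (h12 : M e.1.1 e'.1.2 = 2)
    (h21 : M e.1.2 e'.1.1 = 2) (h22 : M e.1.2 e'.1.2 = 2) :
    Commute (pmk M (.of (Sum.inl e))) (pmk M (.of (Sum.inl e'))) := by
  have hrel := pmk_rel M (BethRel.comm e e' h11 h12 h21 h22
    (ne_of_eq_two M h11) (ne_of_eq_two M h12) (ne_of_eq_two M h21) (ne_of_eq_two M h22))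
  change pmk M (FreeGroup.of (α := BethGen M) (Sum.inl e) * FreeGroup.of (α := BethGen M) (Sum.inl e') * (FreeGroup.of (α := BethGen M) (Sum.inl e') * FreeGroup.of (α := BethGen M) (Sum.inl e))⁻¹) = 1 at hrel
  rw [map_mul, map_mul, map_inv, map_mul, mul_inv_eq_one] at hrel
  exact hrel

lemma RP_cases {i j : Fin n} (h : coxAdj M i j) :
    ∃ e : CoxEdge M,
      (RP M i j = pmk M (.of (Sum.inl e)) ∨ RP M i j = (pmk M (.of (Sum.inl e)))⁻¹) ∧
      ((e.1.1 = i ∧ e.1.2 = j) ∨ (e.1.1 = j ∧ e.1.2 = i)) := by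
  rcases lt_or_gt_of_ne h.1 with hlt | hgt
  · refine ⟨⟨(i, j), hlt, h.2⟩, Or.inl ?_, Or.inl ⟨rfl, rfl⟩⟩
    rw [RP, rW, dif_pos]
  · refine ⟨⟨(j, i), hgt, by rw [M.symmetric]; exact h.2⟩, Or.inr ?_, Or.inr ⟨rfl, rfl⟩⟩
    rw [RP, rW, dif_neg (fun hh => absurd hh.1 (asymm hgt)), dif_pos, map_inv]

lemma comm_RP {a b c d : Fin n} (hab : coxAdj M a b) (hcd : coxAdj M c d)
    (hM : ∀ x y : Fin n, (x = a ∨ x = b) → (y = c ∨ y = d) → M x y = 2) :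
    Commute (RP M a b) (RP M c d) := by
  obtain ⟨e, he, heloc⟩ := RP_cases M hab
  obtain ⟨f, hf, hfloc⟩ := RP_cases M hcd
  have hcore : Commute (pmk M (.of (Sum.inl e))) (pmk M (.of (Sum.inl f))) := by
    apply commute_of_comm_rel
    · exact hM _ _ (by rcases heloc with ⟨h, _⟩ | ⟨h, _⟩ <;> simp [h])
        (by rcases hfloc with ⟨h, _⟩ | ⟨h, _⟩ <;> simp [h])
    · exact hM _ _ (by rcases heloc with ⟨h, _⟩ | ⟨h, _⟩ <;> simp [h])
        (by rcases hfloc with ⟨_, h⟩ | ⟨_, h⟩ <;> simp [h])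
    · exact hM _ _ (by rcases heloc with ⟨_, h⟩ | ⟨_, h⟩ <;> simp [h])
        (by rcases hfloc with ⟨h, _⟩ | ⟨h, _⟩ <;> simp [h])
    · exact hM _ _ (by rcases heloc with ⟨_, h⟩ | ⟨_, h⟩ <;> simp [h])
        (by rcases hfloc with ⟨_, h⟩ | ⟨_, h⟩ <;> simp [h])
  rcases he with he | he <;> rcases hf with hf | hf <;> rw [he, hf]
  · exact hcore
  · exact hcore.inv_right
  · exact hcore.inv_left
  · exact hcore.inv_left.inv_right
lemma pmk_eq {w1 w2 : FreeGroup (BethGen M)} (h : BethRel M (w1 * w2⁻¹)) :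
    pmk M w1 = pmk M w2 := by
  have := pmk_rel M h
  rw [map_mul, map_inv, mul_inv_eq_one] at this
  exact this

lemma rel_two_left {i j k : Fin n} (hij : coxAdj M i j) (hjk : coxAdj M j k)
    (hik : i < k) (h2 : M i k = 2) :
    RP M i j * RP M j k * tP M k = RP M k j * RP M j i * tP M i := by
  have := pmk_eq M (BethRel.two_left i j k hij hjk hik h2)
  simpa [RP, tP, map_mul] using this

lemma rel_two_right {i j k : Fin n} (hij : coxAdj M i j) (hjk : coxAdj M j k)
    (hik : i < k) (h2 : M i k = 2) :
    tP M k * RP M i j * RP M j k = RP M k j * RP M j i * tP M i := by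
  have := pmk_eq M (BethRel.two_right i j k hij hjk hik h2)
  simpa [RP, tP, map_mul] using this

lemma rel_three_left {i j k l : Fin n} (hij : coxAdj M i j) (hjk : coxAdj M j k)
    (hkl : coxAdj M k l) (hil : i < l) (h2 : M i l = 2) :
    RP M i j * RP M j k * RP M k l * tP M l
      = RP M l k * RP M k j * RP M j i * tP M i := by
  have := pmk_eq M (BethRel.three_left i j k l hij hjk hkl hil h2)
  simpa [RP, tP, map_mul] using this

lemma rel_three_right {i j k l : Fin n} (hij : coxAdj M i j) (hjk : coxAdj M j k)
    (hkl : coxAdj M k l) (hil : i < l) (h2 : M i l = 2) :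
    tP M l * RP M i j * RP M j k * RP M k l
      = RP M l k * RP M k j * RP M j i * tP M i := by
  have := pmk_eq M (BethRel.three_right i j k l hij hjk hkl hil h2)
  simpa [RP, tP, map_mul] using this

lemma rel_even_left {i j : Fin n} (hij : i < j) (h2 : 2 < M i j) (he : M i j % 2 = 0) :
    (RP M i j * tP M j) ^ (M i j / 2) = (RP M j i * tP M i) ^ (M i j / 2) := by
  have := pmk_eq M (BethRel.even_left i j hij h2 he)
  simpa [RP, tP, map_mul, map_pow] using this

lemma rel_even_right {i j : Fin n} (hij : i < j) (h2 : 2 < M i j) (he : M i j % 2 = 0) :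
    (tP M j * RP M i j) ^ (M i j / 2) = (RP M j i * tP M i) ^ (M i j / 2) := by
  have := pmk_eq M (BethRel.even_right i j hij h2 he)
  simpa [RP, tP, map_mul, map_pow] using this

lemma rel_odd_left {i j : Fin n} (hij : i < j) (hadj : M i j ≠ 2) (ho : M i j % 2 = 1) :
    (RP M i j * tP M j) ^ ((M i j - 1) / 2) * RP M i j
      = (RP M j i * tP M i) ^ ((M i j - 1) / 2) := by
  have := pmk_eq M (BethRel.odd_left i j hij hadj ho)
  simpa [RP, tP, map_mul, map_pow] using this

lemma rel_odd_right {i j : Fin n} (hij : i < j) (hadj : M i j ≠ 2) (ho : M i j % 2 = 1) :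
    (RP M i j * tP M j) ^ ((M i j + 1) / 2)
      = tP M i * (RP M j i * tP M i) ^ ((M i j - 1) / 2) := by
  have := pmk_eq M (BethRel.odd_right i j hij hadj ho)
  simpa [RP, tP, map_mul, map_pow] using this

/-- From the two defining forms of a length-2/3 relation, get commutation after a flip of
orientation. -/
lemma commute_flip {G : Type*} [Group G] {A ta tb : G}
    (hC1 : A * tb = A⁻¹ * ta) (h : Commute A ta) : Commute A tb := by
  have htb : tb = A⁻¹ * A⁻¹ * ta := by
    rw [mul_assoc, ← hC1]; group
  have h' : ta * A = A * ta := h.symm.eq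
  unfold Commute SemiconjBy
  rw [htb]
  calc A * (A⁻¹ * A⁻¹ * ta) = A⁻¹ * ta := by group
    _ = A⁻¹ * A⁻¹ * (A * ta) := by group
    _ = A⁻¹ * A⁻¹ * (ta * A) := by rw [h']
    _ = A⁻¹ * A⁻¹ * ta * A := by group
lemma commute_of_two_eq {G : Type*} [Group G] {x t z : G} (hL : x * t = z) (hR : t * x = z) :
    Commute x t := by
  unfold Commute SemiconjBy; rw [hL, hR]

section Bases

variable (hconn : ∀ i j : Fin n, Relation.ReflTransGen (coxAdj M) i j)

lemma base2 {a u b : Fin n} (h1 : coxAdj M a u) (h2 : coxAdj M u b) (hM : M a b = 2) :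
    rho M hconn a b * tP M b = rho M hconn b a * tP M a
      ∧ Commute (rho M hconn a b) (tP M b) := by
  have hab : rho M hconn a b = RP M a u * RP M u b := by
    rw [← rho_mul M hconn a u b, rho_edge M hconn h1, rho_edge M hconn h2]
  have hba : rho M hconn b a = RP M b u * RP M u a := by
    rw [← rho_mul M hconn b u a, rho_edge M hconn (coxAdj_symm M h2),
      rho_edge M hconn (coxAdj_symm M h1)]
  rcases lt_or_gt_of_ne (ne_of_eq_two M hM) with hlt | hgt
  · have L := rel_two_left M h1 h2 hlt hM
    have R := rel_two_right M h1 h2 hlt hM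
    have R' : tP M b * (RP M a u * RP M u b) = RP M b u * RP M u a * tP M a := by
      rw [← mul_assoc]; exact R
    constructor
    · rw [hab, hba]; exact L
    · rw [hab]
      exact commute_of_two_eq L R'
  · have hM' : M b a = 2 := by rw [M.symmetric]; exact hM
    have L := rel_two_left M (coxAdj_symm M h2) (coxAdj_symm M h1) hgt hM'
    have R := rel_two_right M (coxAdj_symm M h2) (coxAdj_symm M h1) hgt hM'
    have R' : tP M a * (RP M b u * RP M u a) = RP M a u * RP M u b * tP M b := by
      rw [← mul_assoc]; exact R
    have hC1 : rho M hconn a b * tP M b = rho M hconn b a * tP M a := by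
      rw [hab, hba]; exact L.symm
    refine ⟨hC1, ?_⟩
    have hcomm_ba : Commute (rho M hconn b a) (tP M a) := by
      rw [hba]; exact commute_of_two_eq L R'
    have h' : Commute (rho M hconn a b) (tP M a) := by
      have := hcomm_ba.inv_left
      rwa [← rho_symm M hconn b a] at this
    apply commute_flip (ta := tP M a) ?_ h'
    rw [← rho_symm M hconn a b]; exact hC1

lemma base3 {a u v b : Fin n} (h1 : coxAdj M a u) (h2 : coxAdj M u v) (h3 : coxAdj M v b)
    (hM : M a b = 2) :
    rho M hconn a b * tP M b = rho M hconn b a * tP M a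
      ∧ Commute (rho M hconn a b) (tP M b) := by
  have hab : rho M hconn a b = RP M a u * RP M u v * RP M v b := by
    rw [← rho_mul M hconn a u b, ← rho_mul M hconn u v b, rho_edge M hconn h1,
      rho_edge M hconn h2, rho_edge M hconn h3, mul_assoc]
  have hba : rho M hconn b a = RP M b v * RP M v u * RP M u a := by
    rw [← rho_mul M hconn b v a, ← rho_mul M hconn v u a,
      rho_edge M hconn (coxAdj_symm M h3), rho_edge M hconn (coxAdj_symm M h2),
      rho_edge M hconn (coxAdj_symm M h1), mul_assoc]
  rcases lt_or_gt_of_ne (ne_of_eq_two M hM) with hlt | hgt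
  · have L := rel_three_left M h1 h2 h3 hlt hM
    have R := rel_three_right M h1 h2 h3 hlt hM
    have R' : tP M b * (RP M a u * RP M u v * RP M v b)
        = RP M b v * RP M v u * RP M u a * tP M a := by
      rw [← mul_assoc, ← mul_assoc]; exact R
    constructor
    · rw [hab, hba]; exact L
    · rw [hab]; exact commute_of_two_eq L R'
  · have hM' : M b a = 2 := by rw [M.symmetric]; exact hM
    have L := rel_three_left M (coxAdj_symm M h3) (coxAdj_symm M h2) (coxAdj_symm M h1) hgt hM'
    have R := rel_three_right M (coxAdj_symm M h3) (coxAdj_symm M h2) (coxAdj_symm M h1) hgt hM'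
    have R' : tP M a * (RP M b v * RP M v u * RP M u a)
        = RP M a u * RP M u v * RP M v b * tP M b := by
      rw [← mul_assoc, ← mul_assoc]; exact R
    have hC1 : rho M hconn a b * tP M b = rho M hconn b a * tP M a := by
      rw [hab, hba]; exact L.symm
    refine ⟨hC1, ?_⟩
    have hcomm_ba : Commute (rho M hconn b a) (tP M a) := by
      rw [hba]; exact commute_of_two_eq L R'
    have h' : Commute (rho M hconn a b) (tP M a) := by
      have := hcomm_ba.inv_left
      rwa [← rho_symm M hconn b a] at this
    apply commute_flip (ta := tP M a) ?_ h'
    rw [← rho_symm M hconn a b]; exact hC1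

end Bases
lemma CP.snoc {m : CoxeterMatrix (Fin n)} {i j : Fin n} (p : CP m i j) (hp : 0 < p.len) :
    ∃ w, ∃ q : CP m i w, coxAdj m w j ∧ q.len + 1 = p.len := by
  induction p with
  | nil => simp [CP.len] at hp
  | cons h p' ih =>
      rcases Nat.eq_zero_or_pos p'.len with h0 | hpos
      · have hkj := CP.eq_of_len_zero p' h0
        subst hkj
        exact ⟨_, .nil _, h, by simp [CP.len, h0]⟩
      · obtain ⟨w, q, hadj, hq⟩ := ih hpos
        refine ⟨w, .cons h q, hadj, ?_⟩
        simp only [CP.len] at *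
        omega

section MainC1

variable (hconn : ∀ i j : Fin n, Relation.ReflTransGen (coxAdj M) i j)

theorem C1_main : ∀ s : ℕ, ∀ i j : Fin n, dst M hconn i j ≤ s → M i j = 2 →
    rho M hconn i j * tP M j = rho M hconn j i * tP M i := by
  intro s
  induction s with
  | zero =>
      intro i j hd hM
      have := eq_of_dst_zero M hconn (Nat.le_zero.mp hd)
      subst this
      rw [M.diagonal] at hM
  | succ s IH =>
      intro i j hd hM
      by_cases hle : dst M hconn i j ≤ s
      · exact IH i j hle hM
      have hs : dst M hconn i j = s + 1 := by omega
      obtain ⟨p, hp⟩ := exists_dst M hconn i j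
      rw [hs] at hp
      cases p with
      | nil =>
          rw [M.diagonal] at hM
      | cons h₁ p₁ =>
          rename_i v₁
          have hp₁ : p₁.len = s := by simp only [CP.len] at hp; omega
          rcases s with _ | (_ | (_ | t))
          · have := CP.eq_of_len_zero p₁ hp₁
            subst this
            exact absurd hM h₁.2
          · exact (base2 M hconn h₁ (CP.adj_of_len_one p₁ hp₁) hM).1
          · cases p₁ with
            | nil => simp [CP.len] at hp₁
            | cons h₂ p₂ =>
                exact (base3 M hconn h₁ h₂ (CP.adj_of_len_one p₂ (by
                  simp only [CP.len] at hp₁; omega)) hM).1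
          · -- the inductive step
            obtain ⟨w, q, hlast, hq⟩ := CP.snoc p₁ (by omega)
            have hqlen : q.len = t + 2 := by omega
            -- distance upper bounds
            have hd_1j : dst M hconn v₁ j ≤ t + 3 := by
              have := dst_le M hconn p₁; omega
            have hd_iw : dst M hconn i w ≤ t + 3 := by
              have := dst_le M hconn (CP.cons h₁ q)
              simp only [CP.len] at this; omega
            have hd_1w : dst M hconn v₁ w ≤ t + 2 := by
              have := dst_le M hconn q; omega
            -- distance lower bounds / M = 2 facts
            have hd_i1 : dst M hconn i v₁ ≤ 1 := dst_le_one_of_adj M hconn h₁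
            have hd_wj : dst M hconn w j ≤ 1 := dst_le_one_of_adj M hconn hlast
            have hM1j : M v₁ j = 2 := by
              apply M2_of_two_le_dst M hconn
              have := dst_triangle M hconn i v₁ j; omega
            have hMiw : M i w = 2 := by
              apply M2_of_two_le_dst M hconn
              have := dst_triangle M hconn i w j; omega
            have hM1w : M v₁ w = 2 := by
              apply M2_of_two_le_dst M hconn
              have h1 := dst_triangle M hconn i v₁ w
              have h2 := dst_triangle M hconn i w j
              omega
            -- the commuting edges
            have hcomm : Commute (RP M i v₁) (RP M w j) := by
              apply comm_RP M h₁ hlast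
              rintro x y (rfl | rfl) (rfl | rfl)
              · exact hMiw
              · exact hM
              · exact hM1w
              · exact hM1j
            -- IHs
            have hC1X := IH v₁ w (by omega) hM1w
            have hC1U := IH i w (by omega) hMiw
            have hC1V := IH v₁ j (by omega) hM1j
            -- notation
            set r0 := rho M hconn i v₁ with hr0
            set X := rho M hconn v₁ w with hX
            set rE := rho M hconn w j with hrE
            have hr0RP : r0 = RP M i v₁ := rho_edge M hconn h₁
            have hrERP : rE = RP M w j := rho_edge M hconn hlast
            have hcomm' : Commute r0 rE := by rw [hr0RP, hrERP]; exact hcomm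
            have hU : rho M hconn i w = r0 * X := (rho_mul M hconn i v₁ w).symm
            have hV : rho M hconn v₁ j = X * rE := (rho_mul M hconn v₁ w j).symm
            have hW : rho M hconn i j = r0 * (X * rE) := by
              rw [← rho_mul M hconn i v₁ j, hV]
            -- rewrite IHs
            rw [rho_symm M hconn v₁ w] at hC1X
            rw [rho_symm M hconn i w, hU] at hC1U
            rw [rho_symm M hconn v₁ j, hV] at hC1V
            -- hC1X : X * tP w = X⁻¹ * tP v₁
            -- hC1U : (r0 * X) * tP w = (r0 * X)⁻¹ * tP i
            -- hC1V : (X * rE) * tP j = (X * rE)⁻¹ * tP v₁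
            have htw : tP M w = X⁻¹ * (X⁻¹ * tP M v₁) := by
              rw [← hC1X]; group
            have spade : r0 * (X⁻¹ * tP M v₁) = X⁻¹ * (r0⁻¹ * tP M i) := by
              have h' := hC1U
              rw [htw] at h'
              calc r0 * (X⁻¹ * tP M v₁) = r0 * X * (X⁻¹ * (X⁻¹ * tP M v₁)) := by group
                _ = (r0 * X)⁻¹ * tP M i := h'
                _ = X⁻¹ * (r0⁻¹ * tP M i) := by group
            rw [hW, rho_symm M hconn i j, hW]
            calc r0 * (X * rE) * tP M j = r0 * ((X * rE) * tP M j) := by group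
              _ = r0 * ((X * rE)⁻¹ * tP M v₁) := by rw [hC1V]
              _ = r0 * rE⁻¹ * (X⁻¹ * tP M v₁) := by group
              _ = rE⁻¹ * r0 * (X⁻¹ * tP M v₁) := by rw [hcomm'.inv_right.eq]
              _ = rE⁻¹ * (r0 * (X⁻¹ * tP M v₁)) := by group
              _ = rE⁻¹ * (X⁻¹ * (r0⁻¹ * tP M i)) := by rw [spade]
              _ = (r0 * (X * rE))⁻¹ * tP M i := by group

end MainC1
section MainD

variable (hconn : ∀ i j : Fin n, Relation.ReflTransGen (coxAdj M) i j)

lemma C1_all {i j : Fin n} (hM : M i j = 2) :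
    rho M hconn i j * tP M j = rho M hconn j i * tP M i :=
  C1_main M hconn (dst M hconn i j) i j le_rfl hM

/-- Two composable canonical path words between pairwise-commuting vertices commute. -/
lemma G2 {x y z : Fin n} (hxy : M x y = 2) (hyz : M y z = 2) (hxz : M x z = 2) :
    Commute (rho M hconn x y) (rho M hconn y z) := by
  set Z := rho M hconn x y with hZ
  set B := rho M hconn y z with hB
  have hα := C1_all M hconn hxz
  rw [← rho_mul M hconn x y z, rho_symm M hconn x z, ← rho_mul M hconn x y z] at hα
  -- hα : (Z * B) * tP z = (Z * B)⁻¹ * tP x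
  have hβ := C1_all M hconn hxy
  rw [rho_symm M hconn x y] at hβ
  -- hβ : Z * tP y = Z⁻¹ * tP x
  have hγ := C1_all M hconn hyz
  rw [rho_symm M hconn y z] at hγ
  -- hγ : B * tP z = B⁻¹ * tP y
  have htx : tP M x = Z * (Z * tP M y) := by rw [hZ, hβ]; group
  have htz : tP M z = B⁻¹ * (B⁻¹ * tP M y) := by rw [hB, ← hγ]; group
  rw [htx, htz] at hα
  have key : Z * B⁻¹ * tP M y = B⁻¹ * Z * tP M y := by
    calc Z * B⁻¹ * tP M y = Z * B * (B⁻¹ * (B⁻¹ * tP M y)) := by group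
      _ = (Z * B)⁻¹ * (Z * (Z * tP M y)) := hα
      _ = B⁻¹ * Z * tP M y := by group
  have key' : Z * B⁻¹ = B⁻¹ * Z := mul_right_cancel key
  have : Commute Z B⁻¹ := key'
  have := this.inv_right
  rwa [inv_inv] at this

theorem D_main : ∀ s : ℕ, ∀ i j : Fin n, dst M hconn i j ≤ s → M i j = 2 →
    Commute (rho M hconn i j) (tP M j) := by
  intro s
  induction s with
  | zero =>
      intro i j hd hM
      have := eq_of_dst_zero M hconn (Nat.le_zero.mp hd)
      subst this
      rw [M.diagonal] at hM
      exact absurd hM (by norm_num)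
  | succ s IH =>
      intro i j hd hM
      by_cases hle : dst M hconn i j ≤ s
      · exact IH i j hle hM
      have hs : dst M hconn i j = s + 1 := by omega
      obtain ⟨p, hp⟩ := exists_dst M hconn i j
      rw [hs] at hp
      cases p with
      | nil =>
          rw [M.diagonal] at hM
          exact absurd hM (by norm_num)
      | cons h₁ p₁ =>
          rename_i v₁
          have hp₁ : p₁.len = s := by simp only [CP.len] at hp; omega
          rcases s with _ | (_ | (_ | t))
          · have := CP.eq_of_len_zero p₁ hp₁
            subst this
            exact absurd hM h₁.2
          · exact (base2 M hconn h₁ (CP.adj_of_len_one p₁ hp₁) hM).2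
          · cases p₁ with
            | nil => simp [CP.len] at hp₁
            | cons h₂ p₂ =>
                exact (base3 M hconn h₁ h₂ (CP.adj_of_len_one p₂ (by
                  simp only [CP.len] at hp₁; omega)) hM).2
          · -- inductive step : peel the two last vertices
            have hplen : (CP.cons h₁ p₁).len = t + 4 := by simp only [CP.len]; omega
            obtain ⟨w, q, hwj, hq⟩ := CP.snoc (CP.cons h₁ p₁) (by omega)
            have hqlen : q.len = t + 3 := by omega
            obtain ⟨y, q₂, hyw, hq₂⟩ := CP.snoc q (by omega)
            have hq₂len : q₂.len = t + 2 := by omega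
            -- distances
            have hdiy : dst M hconn i y ≤ t + 2 := by
              have := dst_le M hconn q₂; omega
            have hdyj : dst M hconn y j ≤ 2 := by
              have := dst_le M hconn (CP.cons hyw (CP.single hwj))
              simp only [CP.len, CP.single] at this
              omega
            have hMyj : M y j = 2 := by
              apply M2_of_two_le_dst M hconn
              have := dst_triangle M hconn i y j
              omega
            have hMiy : M i y = 2 := by
              apply M2_of_two_le_dst M hconn
              have := dst_triangle M hconn i y j
              omega
            have hMjy : M j y = 2 := by rw [M.symmetric]; exact hMyj
            -- ingredients
            have hC1yj := C1_all M hconn hMyj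
            have htj : tP M j = rho M hconn j y * (rho M hconn j y * tP M y) := by
              have : tP M j = (rho M hconn y j)⁻¹ * (rho M hconn j y * tP M y) := by
                rw [← hC1yj]; group
              rwa [← rho_symm M hconn y j] at this
            have hDiy : Commute (rho M hconn i y) (tP M y) := IH i y (by omega) hMiy
            have hDjy : Commute (rho M hconn j y) (tP M y) := IH j y (by
              rw [dst_comm]; omega) hMjy
            have hG2 : Commute (rho M hconn i y) (rho M hconn y j) :=
              G2 M hconn hMiy hMyj hM
            have hWd : rho M hconn i j = rho M hconn i y * rho M hconn y j :=
              (rho_mul M hconn i y j).symm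
            have cWty : Commute (rho M hconn i j) (tP M y) := by
              rw [hWd]
              apply Commute.mul_left hDiy
              have := hDjy.inv_left
              rwa [← rho_symm M hconn j y] at this
            have cWjy : Commute (rho M hconn i j) (rho M hconn j y) := by
              rw [hWd]
              apply Commute.mul_left
              · have := hG2.inv_right
                rwa [← rho_symm M hconn y j] at this
              · have := (Commute.refl (rho M hconn y j)).inv_right
                rwa [← rho_symm M hconn y j] at this
            have : Commute (rho M hconn i j) (rho M hconn j y * (rho M hconn j y * tP M y)) :=
              cWjy.mul_right (cWjy.mul_right cWty)
            rw [← htj] at this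
            exact this

end MainD
section Cores

variable (hconn : ∀ i j : Fin n, Relation.ReflTransGen (coxAdj M) i j)

lemma D_all {i j : Fin n} (hM : M i j = 2) :
    Commute (rho M hconn i j) (tP M j) :=
  D_main M hconn (dst M hconn i j) i j le_rfl hM

lemma coxAdj_of_ne_two {i j : Fin n} (hij : i < j) (h2 : M i j ≠ 2) : coxAdj M i j :=
  ⟨ne_of_lt hij, h2⟩

lemma coreEL {i j : Fin n} (hij : i < j) {q : ℕ} (hq : M i j = 2*q) (hq0 : 0 < q) :
    (rho M hconn i j * tP M j)^q = (rho M hconn j i * tP M i)^q := by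
  rcases Nat.lt_or_ge q 2 with h1 | h2
  · have : q = 1 := by omega
    subst this
    simpa using C1_all M hconn (by omega)
  · have hadj : coxAdj M i j := coxAdj_of_ne_two M hij (by omega)
    rw [rho_edge M hconn hadj, rho_edge M hconn (coxAdj_symm M hadj)]
    have := rel_even_left M hij (by omega) (by omega)
    rwa [show M i j / 2 = q by omega] at this

lemma coreER {i j : Fin n} (hij : i < j) {q : ℕ} (hq : M i j = 2*q) (hq0 : 0 < q) :
    (tP M j * rho M hconn i j)^q = (rho M hconn j i * tP M i)^q := by
  rcases Nat.lt_or_ge q 2 with h1 | h2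
  · have : q = 1 := by omega
    subst this
    simp only [pow_one]
    rw [← (D_all M hconn (by omega)).eq]
    exact C1_all M hconn (by omega)
  · have hadj : coxAdj M i j := coxAdj_of_ne_two M hij (by omega)
    rw [rho_edge M hconn hadj, rho_edge M hconn (coxAdj_symm M hadj)]
    have := rel_even_right M hij (by omega) (by omega)
    rwa [show M i j / 2 = q by omega] at this

lemma coreOL {i j : Fin n} (hij : i < j) {k : ℕ} (hk : M i j = 2*k+1) :
    (rho M hconn i j * tP M j)^k * rho M hconn i j
      = (rho M hconn j i * tP M i)^k := by
  have hadj : coxAdj M i j := coxAdj_of_ne_two M hij (by omega)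
  rw [rho_edge M hconn hadj, rho_edge M hconn (coxAdj_symm M hadj)]
  have := rel_odd_left M hij (by omega) (by omega)
  rwa [show (M i j - 1) / 2 = k by omega] at this

lemma coreOR {i j : Fin n} (hij : i < j) {k : ℕ} (hk : M i j = 2*k+1) :
    (rho M hconn i j * tP M j)^(k+1)
      = tP M i * (rho M hconn j i * tP M i)^k := by
  have hadj : coxAdj M i j := coxAdj_of_ne_two M hij (by omega)
  rw [rho_edge M hconn hadj, rho_edge M hconn (coxAdj_symm M hadj)]
  have := rel_odd_right M hij (by omega) (by omega)
  rwa [show (M i j - 1) / 2 = k by omega, show (M i j + 1) / 2 = k + 1 by omega] at this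

lemma coreCO1 {i j : Fin n} (hij : i < j) {k : ℕ} (hk : M i j = 2*k+1) :
    (rho M hconn j i * tP M i)^(k+1) = tP M j * (rho M hconn i j * tP M j)^k := by
  set r := rho M hconn i j with hr
  have hrji : rho M hconn j i = r⁻¹ := rho_symm M hconn i j
  set w := r * tP M j with hw
  set u := r⁻¹ * tP M i with hu
  have OL : w^k * r = u^k := by
    rw [hw, hu, ← hrji]; exact coreOL M hconn hij hk
  have OR : w^(k+1) = tP M i * u^k := by
    rw [hw, hu, ← hrji]; exact coreOR M hconn hij hk
  have h1 : u^(k+1) = w^k * tP M i := by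
    calc u^(k+1) = u^k * u := pow_succ u k
      _ = (w^k * r) * (r⁻¹ * tP M i) := by rw [OL]
      _ = w^k * tP M i := by group
  have hstar2 : r * (w^k * tP M i) = tP M i * (w^k * r) := by
    have hcp : u^k * u^(k+1) = u^(k+1) * u^k := pow_mul_comm u k (k+1)
    rw [h1, ← OL] at hcp
    have : w ^ k * (r * (w ^ k * tP M i)) = w ^ k * (tP M i * (w ^ k * r)) := by
      calc w ^ k * (r * (w ^ k * tP M i)) = w ^ k * r * (w ^ k * tP M i) := by group
        _ = w ^ k * tP M i * (w ^ k * r) := hcp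
        _ = w ^ k * (tP M i * (w ^ k * r)) := by group
    exact mul_left_cancel this
  have key : w^k * tP M i = tP M j * w^k := by
    have hr' : r * (w^k * tP M i) = w^(k+1) := by
      rw [hstar2, OL, OR]
    have htj : r⁻¹ * w ^ (k + 1) = tP M j * w ^ k := by
      rw [pow_succ', hw, mul_assoc, inv_mul_cancel_left]
    rw [← htj, ← hr']
    group
  rw [hrji, ← hu, h1, key]

end Cores
lemma conjpow {G : Type*} [Group G] (c x : G) (q : ℕ) :
    (c⁻¹ * (x * c))^q = c⁻¹ * (x^q * c) := by
  have := conj_pow (a := c⁻¹) (b := x) (i := q)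
  rw [inv_inv] at this
  calc (c⁻¹ * (x * c))^q = (c⁻¹ * x * c)^q := by rw [mul_assoc]
    _ = c⁻¹ * x ^ q * c := this
    _ = c⁻¹ * (x^q * c) := by rw [mul_assoc]

section ABDefs

variable (hconn : ∀ i j : Fin n, Relation.ReflTransGen (coxAdj M) i j) (i0 : Fin n)

noncomputable def aP (x : Fin n) : P M := rho M hconn x i0

noncomputable def AP (x : Fin n) : P M :=
  (tP M i0)⁻¹ * ((aP M hconn i0 x)⁻¹ * tP M x)

noncomputable def BP (x : Fin n) : P M := aP M hconn i0 x * tP M i0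

lemma aP_mul_aP_inv (x y : Fin n) :
    aP M hconn i0 x * (aP M hconn i0 y)⁻¹ = rho M hconn x y := by
  rw [aP, aP, ← rho_symm M hconn y i0, rho_mul]

lemma BP_mul_AP (x y : Fin n) :
    BP M hconn i0 x * AP M hconn i0 y = rho M hconn x y * tP M y := by
  rw [BP, AP, ← aP_mul_aP_inv M hconn i0 x y]
  group

lemma BP_mul_BP_inv (x y : Fin n) :
    BP M hconn i0 x * (BP M hconn i0 y)⁻¹ = rho M hconn x y := by
  rw [BP, BP, ← aP_mul_aP_inv M hconn i0 x y]
  group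

lemma BP_mul_AP_self (x : Fin n) :
    BP M hconn i0 x * AP M hconn i0 x = tP M x := by
  rw [BP_mul_AP, rho_self, one_mul]

lemma rho_mul_BP (x y : Fin n) :
    rho M hconn x y * BP M hconn i0 y = BP M hconn i0 x := by
  rw [BP, BP, aP, aP, ← mul_assoc, rho_mul]

lemma AP_mul_BP (x y : Fin n) :
    AP M hconn i0 x * BP M hconn i0 y
      = (BP M hconn i0 x)⁻¹ * ((tP M x * rho M hconn y x) * BP M hconn i0 x) := by
  have h : rho M hconn y x * aP M hconn i0 x = aP M hconn i0 y := by
    rw [aP, aP, rho_mul]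
  rw [AP, BP, BP, ← h]
  group

section Conds

variable {i j : Fin n}

lemma cond_even_false (hij : i < j) {q : ℕ} (hq : M i j = 2*q) (hq0 : 0 < q) :
    (BP M hconn i0 i * AP M hconn i0 j)^q = (BP M hconn i0 j * AP M hconn i0 i)^q := by
  rw [BP_mul_AP, BP_mul_AP]
  exact coreEL M hconn hij hq hq0

lemma cond_even_true (hij : i < j) {q : ℕ} (hq : M i j = 2*q) (hq0 : 0 < q) :
    (AP M hconn i0 i * BP M hconn i0 j)^q = (AP M hconn i0 j * BP M hconn i0 i)^q := by
  rw [AP_mul_BP, AP_mul_BP, conjpow, conjpow]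
  apply mul_left_cancel (a := BP M hconn i0 j)
  have hS : rho M hconn j i * (tP M i * rho M hconn j i)^q
      = (tP M j * rho M hconn i j)^q * rho M hconn j i := by
    calc rho M hconn j i * (tP M i * rho M hconn j i)^q
        = (rho M hconn j i * tP M i)^q * rho M hconn j i := shift_pow _ _ q
      _ = (tP M j * rho M hconn i j)^q * rho M hconn j i := by
          rw [coreER M hconn hij hq hq0]
  calc BP M hconn i0 j * ((BP M hconn i0 i)⁻¹ * ((tP M i * rho M hconn j i)^q * BP M hconn i0 i))
      = (BP M hconn i0 j * (BP M hconn i0 i)⁻¹) * ((tP M i * rho M hconn j i)^q * BP M hconn i0 i) := by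
        group
    _ = rho M hconn j i * ((tP M i * rho M hconn j i)^q * BP M hconn i0 i) := by
        rw [BP_mul_BP_inv]
    _ = (rho M hconn j i * (tP M i * rho M hconn j i)^q) * BP M hconn i0 i := by group
    _ = ((tP M j * rho M hconn i j)^q * rho M hconn j i) * BP M hconn i0 i := by rw [hS]
    _ = (tP M j * rho M hconn i j)^q * (rho M hconn j i * BP M hconn i0 i) := by group
    _ = (tP M j * rho M hconn i j)^q * BP M hconn i0 j := by rw [rho_mul_BP]
    _ = BP M hconn i0 j * ((BP M hconn i0 j)⁻¹ * ((tP M j * rho M hconn i j)^q * BP M hconn i0 j)) := by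
        group

lemma cond_odd_true (hij : i < j) {k : ℕ} (hk : M i j = 2*k+1) :
    (BP M hconn i0 i * AP M hconn i0 j)^k * BP M hconn i0 i
      = (BP M hconn i0 j * AP M hconn i0 i)^k * BP M hconn i0 j := by
  rw [BP_mul_AP, BP_mul_AP]
  calc (rho M hconn i j * tP M j)^k * BP M hconn i0 i
      = (rho M hconn i j * tP M j)^k * (rho M hconn i j * BP M hconn i0 j) := by
        rw [rho_mul_BP]
    _ = ((rho M hconn i j * tP M j)^k * rho M hconn i j) * BP M hconn i0 j := by group
    _ = (rho M hconn j i * tP M i)^k * BP M hconn i0 j := by rw [coreOL M hconn hij hk]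

lemma cond_odd_false (hij : i < j) {k : ℕ} (hk : M i j = 2*k+1) :
    (AP M hconn i0 i * BP M hconn i0 j)^k * AP M hconn i0 i
      = (AP M hconn i0 j * BP M hconn i0 i)^k * AP M hconn i0 j := by
  rw [AP_mul_BP, AP_mul_BP, conjpow, conjpow]
  apply mul_left_cancel (a := BP M hconn i0 j)
  have hL : rho M hconn j i * ((tP M i * rho M hconn j i)^k * tP M i)
      = tP M j * (rho M hconn i j * tP M j)^k := by
    calc rho M hconn j i * ((tP M i * rho M hconn j i)^k * tP M i)
        = (rho M hconn j i * (tP M i * rho M hconn j i)^k) * tP M i := by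
          rw [mul_assoc]
      _ = ((rho M hconn j i * tP M i)^k * rho M hconn j i) * tP M i := by
          rw [shift_pow]
      _ = (rho M hconn j i * tP M i)^(k+1) := by rw [mul_assoc, ← pow_succ]
      _ = tP M j * (rho M hconn i j * tP M j)^k := coreCO1 M hconn hij hk
  calc BP M hconn i0 j * ((BP M hconn i0 i)⁻¹ * ((tP M i * rho M hconn j i)^k * BP M hconn i0 i)
        * AP M hconn i0 i)
      = (BP M hconn i0 j * (BP M hconn i0 i)⁻¹)
        * ((tP M i * rho M hconn j i)^k * (BP M hconn i0 i * AP M hconn i0 i)) := by group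
    _ = rho M hconn j i * ((tP M i * rho M hconn j i)^k * tP M i) := by
        rw [BP_mul_BP_inv, BP_mul_AP_self]
    _ = tP M j * (rho M hconn i j * tP M j)^k := hL
    _ = (tP M j * rho M hconn i j)^k * tP M j := (shift_pow _ _ k)
    _ = (tP M j * rho M hconn i j)^k * (BP M hconn i0 j * AP M hconn i0 j) := by
        rw [BP_mul_AP_self]
    _ = BP M hconn i0 j * ((BP M hconn i0 j)⁻¹ * ((tP M j * rho M hconn i j)^k * BP M hconn i0 j)
        * AP M hconn i0 j) := by group

end Conds

end ABDefs
section Perms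

variable {G : Type*} [Group G]

/-- The permutation of `G × Bool` flipping the `Bool` and multiplying by `u` resp. `v`. -/
def flipP (u v : G) : Equiv.Perm (G × Bool) where
  toFun p := match p with
    | (x, false) => (u * x, true)
    | (x, true) => (v * x, false)
  invFun p := match p with
    | (x, true) => (u⁻¹ * x, false)
    | (x, false) => (v⁻¹ * x, true)
  left_inv := by rintro ⟨x, _ | _⟩ <;> simp
  right_inv := by rintro ⟨x, _ | _⟩ <;> simp

/-- The permutation of `G × Bool` keeping the `Bool` and multiplying by `u` resp. `v`. -/
def keepP (u v : G) : Equiv.Perm (G × Bool) where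
  toFun p := match p with
    | (x, false) => (u * x, false)
    | (x, true) => (v * x, true)
  invFun p := match p with
    | (x, false) => (u⁻¹ * x, false)
    | (x, true) => (v⁻¹ * x, true)
  left_inv := by rintro ⟨x, _ | _⟩ <;> simp
  right_inv := by rintro ⟨x, _ | _⟩ <;> simp

@[simp] lemma flipP_apply_false (u v : G) (x : G) : flipP u v (x, false) = (u * x, true) := rfl
@[simp] lemma flipP_apply_true (u v : G) (x : G) : flipP u v (x, true) = (v * x, false) := rfl
@[simp] lemma keepP_apply_false (u v : G) (x : G) : keepP u v (x, false) = (u * x, false) := rfl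
@[simp] lemma keepP_apply_true (u v : G) (x : G) : keepP u v (x, true) = (v * x, true) := rfl

lemma flip_mul_flip (u v u' v' : G) :
    flipP u v * flipP u' v' = keepP (v * u') (u * v') := by
  apply Equiv.ext
  rintro ⟨x, _ | _⟩ <;> simp [Equiv.Perm.mul_apply, mul_assoc]

lemma keep_mul_keep (u v u' v' : G) :
    keepP u v * keepP u' v' = keepP (u * u') (v * v') := by
  apply Equiv.ext
  rintro ⟨x, _ | _⟩ <;> simp [Equiv.Perm.mul_apply, mul_assoc]

lemma keep_mul_flip (u v a b : G) :
    keepP u v * flipP a b = flipP (v * a) (u * b) := by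
  apply Equiv.ext
  rintro ⟨x, _ | _⟩ <;> simp [Equiv.Perm.mul_apply, mul_assoc]

@[simp] lemma keep_one : keepP (1 : G) 1 = 1 := by
  apply Equiv.ext
  rintro ⟨x, _ | _⟩ <;> simp

lemma keep_pow (u v : G) (q : ℕ) : keepP u v ^ q = keepP (u^q) (v^q) := by
  induction q with
  | zero => simp
  | succ q ih => rw [pow_succ, pow_succ, pow_succ, ih, keep_mul_keep]

lemma flip_inv (u v : G) : (flipP u v)⁻¹ = flipP v⁻¹ u⁻¹ := by
  apply Equiv.ext
  rintro ⟨x, _ | _⟩ <;> rfl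

lemma altProd_flip_even (a b c d : G) (q : ℕ) :
    altProd (flipP a b) (flipP c d) (2*q) = keepP ((b*c)^q) ((a*d)^q) := by
  rw [altProd_two_mul, flip_mul_flip, keep_pow]

lemma altProd_flip_odd (a b c d : G) (q : ℕ) :
    altProd (flipP a b) (flipP c d) (2*q+1) = flipP ((a*d)^q * a) ((b*c)^q * b) := by
  rw [altProd_two_mul_add_one, flip_mul_flip, keep_pow, keep_mul_flip]

end Perms

section PiHom

variable (hconn : ∀ i j : Fin n, Relation.ReflTransGen (coxAdj M) i j) (i0 : Fin n)

noncomputable def piGen (x : Fin n) : Equiv.Perm (P M × Bool) :=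
  flipP (AP M hconn i0 x) (BP M hconn i0 x)

lemma pi_rel : ∀ r ∈ braidRels M,
    FreeGroup.lift (fun x => piGen M hconn i0 x) r = 1 := by
  rintro r ⟨i, j, hij, hm, rfl⟩
  rw [map_mul, map_inv, map_altProd, map_altProd]
  simp only [FreeGroup.lift_apply_of]
  have key : altProd (piGen M hconn i0 i) (piGen M hconn i0 j) (M i j)
      = altProd (piGen M hconn i0 j) (piGen M hconn i0 i) (M i j) := by
    rcases Nat.even_or_odd (M i j) with ⟨q, hq⟩ | ⟨q, hq⟩
    · have hq' : M i j = 2*q := by omega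
      have hq0 : 0 < q := by omega
      rw [hq']
      unfold piGen
      rw [altProd_flip_even, altProd_flip_even,
        cond_even_false M hconn i0 hij hq' hq0, cond_even_true M hconn i0 hij hq' hq0]
    · rw [hq]
      unfold piGen
      rw [altProd_flip_odd, altProd_flip_odd,
        cond_odd_false M hconn i0 hij hq, cond_odd_true M hconn i0 hij hq]
  rw [key, mul_inv_cancel]

noncomputable def piHom : BraidGroup M →* Equiv.Perm (P M × Bool) :=
  PresentedGroup.toGroup (pi_rel M hconn i0)

lemma piHom_gen (x : Fin n) :
    piHom M hconn i0 (braidGen M x) = flipP (AP M hconn i0 x) (BP M hconn i0 x) :=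
  PresentedGroup.toGroup.of (pi_rel M hconn i0)

end PiHom
section PhiHom

/-- The generator images for `Φ : P → BraidGroup`. -/
def phiGenFun : BethGen M → BraidGroup M
  | Sum.inl e => braidGen M e.1.1 * (braidGen M e.1.2)⁻¹
  | Sum.inr i => braidGen M i * braidGen M i

lemma lift_tW (i : Fin n) :
    FreeGroup.lift (phiGenFun M) (tW M i) = braidGen M i * braidGen M i := by
  rw [tW]; erw [FreeGroup.lift_apply_of]; rfl

lemma lift_rW {i j : Fin n} (h : coxAdj M i j) :
    FreeGroup.lift (phiGenFun M) (rW M i j) = braidGen M i * (braidGen M j)⁻¹ := by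
  rcases lt_or_gt_of_ne h.1 with hlt | hgt
  · rw [rW, dif_pos ⟨hlt, h.2⟩]; erw [FreeGroup.lift_apply_of]; rfl
  · have h2 : M j i ≠ 2 := by rw [M.symmetric]; exact h.2
    rw [rW, dif_neg (fun hh => absurd hh.1 (asymm hgt)), dif_pos ⟨hgt, h2⟩, map_inv]
    erw [FreeGroup.lift_apply_of]
    show (braidGen M j * (braidGen M i)⁻¹)⁻¹ = _
    group

lemma lift_pathW : ∀ (l : List (Fin n)) (i : Fin n), List.Chain (coxAdj M) i l →
    FreeGroup.lift (phiGenFun M) (pathW M i l)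
      = braidGen M i * (braidGen M ((i::l).getLast (List.cons_ne_nil _ _)))⁻¹ := by
  intro l
  induction l with
  | nil =>
      intro i _
      simp [pathW]
  | cons j l' ih =>
      intro i hch
      rcases List.chain_cons.mp hch with ⟨hij, hch'⟩
      rw [pathW, map_mul, lift_rW M hij, ih j hch']
      have : ((i :: j :: l').getLast (List.cons_ne_nil _ _))
          = ((j :: l').getLast (List.cons_ne_nil _ _)) := by
        rw [List.getLast_cons (List.cons_ne_nil _ _)]
      rw [this]
      group

lemma phi_rel : ∀ r ∈ { x | BethRel M x }, FreeGroup.lift (phiGenFun M) r = 1 := by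
  intro r hr
  induction hr with
  | cycle i l h =>
      rw [lift_pathW M (l ++ [i]) i h]
      have hg : ((i :: (l ++ [i])).getLast (List.cons_ne_nil _ _)) = i := by simp
      rw [hg, mul_inv_cancel]
  | two_left i j k hij hjk hik h2 =>
      rw [map_mul, map_inv, map_mul, map_mul, map_mul, map_mul, lift_rW M hij, lift_rW M hjk,
        lift_rW M (coxAdj_symm M hjk), lift_rW M (coxAdj_symm M hij), lift_tW, lift_tW]
      have hc := (braid_comm M h2).eq
      have e1 : braidGen M i * (braidGen M j)⁻¹ * (braidGen M j * (braidGen M k)⁻¹)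
          * (braidGen M k * braidGen M k)
          * (braidGen M k * (braidGen M j)⁻¹ * (braidGen M j * (braidGen M i)⁻¹)
          * (braidGen M i * braidGen M i))⁻¹
          = (braidGen M i * braidGen M k) * (braidGen M k * braidGen M i)⁻¹ := by group
      rw [e1, hc, mul_inv_cancel]
  | two_right i j k hij hjk hik h2 =>
      rw [map_mul, map_inv, map_mul, map_mul, map_mul, map_mul, lift_rW M hij, lift_rW M hjk,
        lift_rW M (coxAdj_symm M hjk), lift_rW M (coxAdj_symm M hij), lift_tW, lift_tW]
      have hc := (braid_comm M h2).eq
      have e1 : braidGen M k * braidGen M k * (braidGen M i * (braidGen M j)⁻¹)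
          * (braidGen M j * (braidGen M k)⁻¹)
          * (braidGen M k * (braidGen M j)⁻¹ * (braidGen M j * (braidGen M i)⁻¹)
          * (braidGen M i * braidGen M i))⁻¹
          = braidGen M k * ((braidGen M k * braidGen M i) * (braidGen M i * braidGen M k)⁻¹)
            * (braidGen M k)⁻¹ := by group
      rw [e1, hc]
      group
  | three_left i j k l hij hjk hkl hil h2 =>
      rw [map_mul, map_inv, map_mul, map_mul, map_mul, map_mul, map_mul, map_mul,
        lift_rW M hij, lift_rW M hjk, lift_rW M hkl, lift_rW M (coxAdj_symm M hkl),
        lift_rW M (coxAdj_symm M hjk), lift_rW M (coxAdj_symm M hij), lift_tW, lift_tW]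
      have hc := (braid_comm M h2).eq
      have e1 : braidGen M i * (braidGen M j)⁻¹ * (braidGen M j * (braidGen M k)⁻¹)
          * (braidGen M k * (braidGen M l)⁻¹) * (braidGen M l * braidGen M l)
          * (braidGen M l * (braidGen M k)⁻¹ * (braidGen M k * (braidGen M j)⁻¹)
          * (braidGen M j * (braidGen M i)⁻¹) * (braidGen M i * braidGen M i))⁻¹
          = (braidGen M i * braidGen M l) * (braidGen M l * braidGen M i)⁻¹ := by group
      rw [e1, hc, mul_inv_cancel]
  | three_right i j k l hij hjk hkl hil h2 =>
      rw [map_mul, map_inv, map_mul, map_mul, map_mul, map_mul, map_mul, map_mul,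
        lift_rW M hij, lift_rW M hjk, lift_rW M hkl, lift_rW M (coxAdj_symm M hkl),
        lift_rW M (coxAdj_symm M hjk), lift_rW M (coxAdj_symm M hij), lift_tW, lift_tW]
      have hc := (braid_comm M h2).eq
      have e1 : braidGen M l * braidGen M l * (braidGen M i * (braidGen M j)⁻¹)
          * (braidGen M j * (braidGen M k)⁻¹) * (braidGen M k * (braidGen M l)⁻¹)
          * (braidGen M l * (braidGen M k)⁻¹ * (braidGen M k * (braidGen M j)⁻¹)
          * (braidGen M j * (braidGen M i)⁻¹) * (braidGen M i * braidGen M i))⁻¹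
          = braidGen M l * ((braidGen M l * braidGen M i) * (braidGen M i * braidGen M l)⁻¹)
            * (braidGen M l)⁻¹ := by group
      rw [e1, hc]
      group
  | even_left i j hij h2 he =>
      set q := M i j / 2 with hqdef
      have hm0 : M i j ≠ 0 := by omega
      have halt := braid_mk_rel M hij hm0
      rw [show M i j = 2*q by omega, altProd_two_mul, altProd_two_mul] at halt
      rw [map_mul, map_inv, map_pow, map_pow, map_mul, map_mul, lift_rW M ⟨ne_of_lt hij, by omega⟩,
        lift_rW M (coxAdj_symm M ⟨ne_of_lt hij, by omega⟩), lift_tW, lift_tW]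
      have e1 : braidGen M i * (braidGen M j)⁻¹ * (braidGen M j * braidGen M j)
          = braidGen M i * braidGen M j := by group
      have e2 : braidGen M j * (braidGen M i)⁻¹ * (braidGen M i * braidGen M i)
          = braidGen M j * braidGen M i := by group
      rw [e1, e2, halt, mul_inv_cancel]
  | even_right i j hij h2 he =>
      set q := M i j / 2 with hqdef
      have hm0 : M i j ≠ 0 := by omega
      have halt := braid_mk_rel M hij hm0
      rw [show M i j = 2*q by omega, altProd_two_mul, altProd_two_mul] at halt
      rw [map_mul, map_inv, map_pow, map_pow, map_mul, map_mul, lift_rW M ⟨ne_of_lt hij, by omega⟩,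
        lift_rW M (coxAdj_symm M ⟨ne_of_lt hij, by omega⟩), lift_tW, lift_tW]
      have e1 : braidGen M j * braidGen M j * (braidGen M i * (braidGen M j)⁻¹)
          = braidGen M j * (braidGen M j * braidGen M i) * (braidGen M j)⁻¹ := by group
      have e2 : braidGen M j * (braidGen M i)⁻¹ * (braidGen M i * braidGen M i)
          = braidGen M j * braidGen M i := by group
      rw [e1, e2, conj_pow]
      have key : braidGen M j * (braidGen M j * braidGen M i)^q * (braidGen M j)⁻¹
          = (braidGen M j * braidGen M i)^q := by
        calc braidGen M j * (braidGen M j * braidGen M i)^q * (braidGen M j)⁻¹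
            = braidGen M j * (braidGen M i * braidGen M j)^q * (braidGen M j)⁻¹ := by rw [halt]
          _ = ((braidGen M j * braidGen M i)^q * braidGen M j) * (braidGen M j)⁻¹ := by
              rw [shift_pow]
          _ = (braidGen M j * braidGen M i)^q := by group
      rw [key, mul_inv_cancel]
  | odd_left i j hij hadj ho =>
      set k := (M i j - 1) / 2 with hkdef
      have hm0 : M i j ≠ 0 := by omega
      have halt := braid_mk_rel M hij hm0
      rw [show M i j = 2*k+1 by omega, altProd_two_mul_add_one, altProd_two_mul_add_one] at halt
      simp only [map_mul, map_inv, map_pow]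
      rw [lift_rW M ⟨ne_of_lt hij, hadj⟩, lift_rW M (coxAdj_symm M ⟨ne_of_lt hij, hadj⟩),
        lift_tW, lift_tW]
      have e1 : braidGen M i * (braidGen M j)⁻¹ * (braidGen M j * braidGen M j)
          = braidGen M i * braidGen M j := by group
      have e2 : braidGen M j * (braidGen M i)⁻¹ * (braidGen M i * braidGen M i)
          = braidGen M j * braidGen M i := by group
      rw [e1, e2]
      have e3 : (braidGen M i * braidGen M j)^k * (braidGen M i * (braidGen M j)⁻¹)
          * (((braidGen M j * braidGen M i))^k)⁻¹
          = ((braidGen M i * braidGen M j)^k * braidGen M i)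
            * ((braidGen M j * braidGen M i)^k * braidGen M j)⁻¹ := by group
      rw [e3, halt, mul_inv_cancel]
  | odd_right i j hij hadj ho =>
      set k := (M i j - 1) / 2 with hkdef
      have hm0 : M i j ≠ 0 := by omega
      have halt := braid_mk_rel M hij hm0
      rw [show M i j = 2*k+1 by omega, altProd_two_mul_add_one, altProd_two_mul_add_one] at halt
      simp only [map_mul, map_inv, map_pow]
      rw [lift_rW M ⟨ne_of_lt hij, hadj⟩, lift_rW M (coxAdj_symm M ⟨ne_of_lt hij, hadj⟩),
        lift_tW, lift_tW]
      rw [show (M i j + 1)/2 = k + 1 by omega]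
      have e1 : braidGen M i * (braidGen M j)⁻¹ * (braidGen M j * braidGen M j)
          = braidGen M i * braidGen M j := by group
      have e2 : braidGen M j * (braidGen M i)⁻¹ * (braidGen M i * braidGen M i)
          = braidGen M j * braidGen M i := by group
      rw [e1, e2]
      have key : braidGen M i * braidGen M i * (braidGen M j * braidGen M i)^k
          = (braidGen M i * braidGen M j)^(k+1) := by
        calc braidGen M i * braidGen M i * (braidGen M j * braidGen M i)^k
            = braidGen M i * (braidGen M i * (braidGen M j * braidGen M i)^k) := by
              rw [mul_assoc]
          _ = braidGen M i * ((braidGen M i * braidGen M j)^k * braidGen M i) := by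
              rw [shift_pow]
          _ = braidGen M i * ((braidGen M j * braidGen M i)^k * braidGen M j) := by
              rw [halt]
          _ = (braidGen M i * (braidGen M j * braidGen M i)^k) * braidGen M j := by
              rw [← mul_assoc]
          _ = ((braidGen M i * braidGen M j)^k * braidGen M i) * braidGen M j := by
              rw [shift_pow]
          _ = (braidGen M i * braidGen M j)^(k+1) := by rw [mul_assoc, ← pow_succ]
      rw [← key, mul_inv_cancel]
  | comm e e' h11 h12 h21 h22 d11 d12 d21 d22 =>
      show FreeGroup.lift (phiGenFun M) (FreeGroup.of (α := BethGen M) (Sum.inl e) * FreeGroup.of (α := BethGen M) (Sum.inl e') * (FreeGroup.of (α := BethGen M) (Sum.inl e') * FreeGroup.of (α := BethGen M) (Sum.inl e))⁻¹) = 1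
      rw [map_mul, map_inv, map_mul, map_mul]
      erw [FreeGroup.lift_apply_of, FreeGroup.lift_apply_of]
      show phiGenFun M (Sum.inl e) * phiGenFun M (Sum.inl e')
        * (phiGenFun M (Sum.inl e') * phiGenFun M (Sum.inl e))⁻¹ = 1
      have hcomm : Commute (phiGenFun M (Sum.inl e)) (phiGenFun M (Sum.inl e')) := by
        show Commute (braidGen M e.1.1 * (braidGen M e.1.2)⁻¹)
          (braidGen M e'.1.1 * (braidGen M e'.1.2)⁻¹)
        exact Commute.mul_left
          ((braid_comm M h11).mul_right (braid_comm M h12).inv_right)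
          (((braid_comm M h21).mul_right (braid_comm M h22).inv_right).inv_left)
      rw [hcomm.eq, mul_inv_cancel]

noncomputable def phiHom : P M →* BraidGroup M :=
  PresentedGroup.toGroup (phi_rel M)

lemma phiHom_pmk (w : FreeGroup (BethGen M)) :
    phiHom M (pmk M w) = FreeGroup.lift (phiGenFun M) w := rfl

end PhiHom
section Tracking

variable (hconn : ∀ i j : Fin n, Relation.ReflTransGen (coxAdj M) i j) (i0 : Fin n)

lemma phiHom_tP (i : Fin n) : phiHom M (tP M i) = braidGen M i * braidGen M i := by
  rw [tP]
  exact lift_tW M i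

lemma phiHom_of (x : BethGen M) : phiHom M (PresentedGroup.of x) = phiGenFun M x :=
  PresentedGroup.toGroup.of (phi_rel M)

lemma lift_word {x y : Fin n} (p : CP M x y) :
    FreeGroup.lift (phiGenFun M) p.word = braidGen M x * (braidGen M y)⁻¹ := by
  rw [CP.word_eq_pathW, lift_pathW M _ x (CP.chain_toList p), CP.getLast_toList p]

lemma phiHom_rho (x y : Fin n) :
    phiHom M (rho M hconn x y) = braidGen M x * (braidGen M y)⁻¹ := by
  rw [rho, CP.wordP, phiHom_pmk, lift_word]

lemma phiHom_AP (x : Fin n) :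
    phiHom M (AP M hconn i0 x) = (braidGen M i0)⁻¹ * braidGen M x := by
  rw [AP, aP, map_mul, map_inv, map_mul, map_inv, phiHom_tP, phiHom_rho, phiHom_tP]
  group

lemma phiHom_BP (x : Fin n) :
    phiHom M (BP M hconn i0 x) = braidGen M x * braidGen M i0 := by
  rw [BP, aP, map_mul, phiHom_rho, phiHom_tP]
  group

lemma sign_gen (i : Fin n) : braidSign M (braidGen M i) = -1 :=
  PresentedGroup.toGroup.of _

lemma sign_phi (y : P M) : braidSign M (phiHom M y) = 1 := by
  obtain ⟨z, rfl⟩ := PresentedGroup.mk_surjective _ y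
  induction z using FreeGroup.induction_on with
  | C1 => simp
  | of x =>
      have h1 : (PresentedGroup.mk { x | BethRel M x }) (FreeGroup.of x) = PresentedGroup.of x := rfl
      rw [h1, phiHom_of]
      cases x with
      | inl e => simp [phiGenFun, sign_gen]
      | inr i => simp [phiGenFun, sign_gen]
  | inv_of x ih =>
      rw [map_inv, map_inv, map_inv, ih]
      rfl
  | mul a b ha hb =>
      rw [map_mul, map_mul, map_mul, ha, hb]
      rfl

/-- The section `P × Bool → BraidGroup`. -/
noncomputable def tauF (p : P M × Bool) : BraidGroup M :=
  (if p.2 then braidGen M i0 else 1) * phiHom M p.1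

lemma tau_equivariant (u : BraidGroup M) :
    ∀ p : P M × Bool, tauF M i0 (piHom M hconn i0 u p) = u * tauF M i0 p := by
  have hgen : ∀ x : Fin n, ∀ p : P M × Bool,
      tauF M i0 (piHom M hconn i0 (braidGen M x) p) = braidGen M x * tauF M i0 p := by
    intro x p
    rw [piHom_gen]
    rcases p with ⟨y, _ | _⟩
    · show tauF M i0 (AP M hconn i0 x * y, true) = _
      show braidGen M i0 * phiHom M (AP M hconn i0 x * y) = braidGen M x * (1 * phiHom M y)
      rw [map_mul, phiHom_AP]
      group
    · show tauF M i0 (BP M hconn i0 x * y, false) = _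
      show 1 * phiHom M (BP M hconn i0 x * y) = braidGen M x * (braidGen M i0 * phiHom M y)
      rw [map_mul, phiHom_BP]
      group
  have hinv : ∀ u : BraidGroup M,
      (∀ p, tauF M i0 (piHom M hconn i0 u p) = u * tauF M i0 p) →
      (∀ p, tauF M i0 (piHom M hconn i0 u⁻¹ p) = u⁻¹ * tauF M i0 p) := by
    intro u hu p
    have h2 := hu (piHom M hconn i0 u⁻¹ p)
    rw [map_inv] at h2 ⊢
    rw [show ∀ (f : Equiv.Perm (P M × Bool)) x, f (f⁻¹ x) = x from fun f x => f.apply_symm_apply x] at h2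
    rw [h2]
    group
  obtain ⟨z, rfl⟩ := PresentedGroup.mk_surjective _ u
  induction z using FreeGroup.induction_on with
  | C1 =>
      intro p
      have h0 : (PresentedGroup.mk (braidRels M)) (1 : FreeGroup (Fin n)) = 1 := map_one _
      rw [h0]
      show tauF M i0 (piHom M hconn i0 (1 : BraidGroup M) p) = (1 : BraidGroup M) * tauF M i0 p
      rw [map_one]
      simp
  | of x => exact hgen x
  | inv_of x ih =>
      have h0 : (PresentedGroup.mk (braidRels M)) (FreeGroup.of x)⁻¹
          = ((PresentedGroup.mk (braidRels M)) (FreeGroup.of x))⁻¹ := map_inv _ _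
      rw [h0]
      exact hinv _ ih
  | mul a b ha hb =>
      intro p
      have h0 : (PresentedGroup.mk (braidRels M)) (a * b)
          = (PresentedGroup.mk (braidRels M)) a * (PresentedGroup.mk (braidRels M)) b :=
        map_mul _ _ _
      rw [h0]
      erw [map_mul]
      rw [Equiv.Perm.mul_apply, ha, hb]
      exact (mul_assoc _ _ _).symm

lemma track1 : ∀ (w : FreeGroup (BethGen M)) (x : P M),
    piHom M hconn i0 (phiHom M (pmk M w)) (x, false) = (pmk M w * x, false) := by
  intro w
  induction w using FreeGroup.induction_on with
  | C1 =>
      intro x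
      simp
  | of g =>
      intro x
      have h1 : pmk M (FreeGroup.of g) = PresentedGroup.of g := rfl
      rw [h1, phiHom_of]
      cases g with
      | inl e =>
          show piHom M hconn i0 (braidGen M e.1.1 * (braidGen M e.1.2)⁻¹) (x, false) = _
          rw [map_mul, map_inv, piHom_gen, piHom_gen, flip_inv, flip_mul_flip]
          show (BP M hconn i0 e.1.1 * (BP M hconn i0 e.1.2)⁻¹ * x, false) = _
          rw [BP_mul_BP_inv]
          have hadj : coxAdj M e.1.1 e.1.2 := ⟨ne_of_lt e.2.1, e.2.2⟩
          have : rho M hconn e.1.1 e.1.2 = PresentedGroup.of (Sum.inl e) := by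
            rw [rho_edge M hconn hadj, RP, rW, dif_pos e.2]
            rfl
          rw [this]
          rfl
      | inr i =>
          show piHom M hconn i0 (braidGen M i * braidGen M i) (x, false) = _
          rw [map_mul, piHom_gen, flip_mul_flip]
          show (BP M hconn i0 i * AP M hconn i0 i * x, false) = _
          rw [BP_mul_AP_self]
          rfl
  | inv_of g ih =>
      intro x
      rw [map_inv, map_inv, map_inv]
      rw [Equiv.Perm.inv_def, Equiv.symm_apply_eq, ih]
      have hx : pmk M (FreeGroup.of g) * ((pmk M (FreeGroup.of g))⁻¹ * x) = x := by group
      rw [hx]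
  | mul a b ha hb =>
      intro x
      rw [map_mul, map_mul, map_mul, Equiv.Perm.mul_apply, hb, ha, mul_assoc]

end Tracking

section Final

variable (hconn : ∀ i j : Fin n, Relation.ReflTransGen (coxAdj M) i j) (i0 : Fin n)

include hconn i0

lemma phi_injective : Function.Injective (phiHom M (n := n)) := by
  rw [injective_iff_map_eq_one]
  intro a ha
  obtain ⟨w, rfl⟩ := PresentedGroup.mk_surjective _ a
  have htr := track1 M hconn i0 w 1
  rw [ha, map_one] at htr
  simp only [Equiv.Perm.one_apply, mul_one] at htr
  exact ((Prod.mk.injEq _ _ _ _).mp htr.symm).1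

lemma phi_surjective_alt (u : BraidGroup M) (hu : braidSign M u = 1) :
    ∃ y : P M, phiHom M y = u := by
  have h := tau_equivariant M hconn i0 u (1, false)
  have h1 : tauF M i0 ((1 : P M), false) = 1 := by
    show (1 : BraidGroup M) * phiHom M 1 = 1
    simp
  rw [h1, mul_one] at h
  rcases hp : piHom M hconn i0 u (1, false) with ⟨y, _ | _⟩
  · rw [hp] at h
    refine ⟨y, ?_⟩
    have h2 : tauF M i0 (y, false) = phiHom M y := by
      show (1 : BraidGroup M) * phiHom M y = phiHom M y
      simp
    rw [h2] at h
    exact h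
  · exfalso
    rw [hp] at h
    have h2 : tauF M i0 (y, true) = braidGen M i0 * phiHom M y := rfl
    rw [h2] at h
    have hs : braidSign M u = -1 := by
      rw [← h, map_mul, sign_gen, sign_phi]
      simp
    rw [hu] at hs
    exact absurd hs (by decide)

end Final

end AltBraidProof

open AltBraidProof in
/-- If the Coxeter graph of `M` is connected, the assignment `𝗍_i ↦ g_i²`,
`𝗋_{ij} ↦ g_i g_j⁻¹` extends to a group isomorphism from the edge presentation `𝔅` onto the
alternating subgroup `𝓑⁺` of the braid group. -/
theorem edge_presentation_of_alternating_braid_group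
    (n : ℕ) (hn : 0 < n) (M : CoxeterMatrix (Fin n))
    (hconn : ∀ i j : Fin n, Relation.ReflTransGen (coxAdj M) i j) :
    ∃ e : PresentedGroup { x | BethRel M x } ≃* braidAlt M,
      (∀ i : Fin n,
        ((e (PresentedGroup.of (Sum.inr i)) : braidAlt M) : BraidGroup M) =
          braidGen M i * braidGen M i) ∧
      (∀ ed : CoxEdge M,
        ((e (PresentedGroup.of (Sum.inl ed)) : braidAlt M) : BraidGroup M) =
          braidGen M ed.1.1 * (braidGen M ed.1.2)⁻¹) := by
  classical
  set i0 : Fin n := ⟨0, hn⟩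
  have hmem : ∀ y : P M, phiHom M y ∈ braidAlt M := fun y => by
    rw [braidAlt, MonoidHom.mem_ker]
    exact sign_phi M y
  let Φ' : P M →* braidAlt M := (phiHom M).codRestrict (braidAlt M) hmem
  have hbij : Function.Bijective Φ' := by
    constructor
    · intro a b hab
      apply phi_injective M hconn i0
      exact congrArg Subtype.val hab
    · rintro ⟨u, hu⟩
      obtain ⟨y, hy⟩ := phi_surjective_alt M hconn i0 u
        (by rwa [braidAlt, MonoidHom.mem_ker] at hu)
      exact ⟨y, Subtype.ext hy⟩
  refine ⟨MulEquiv.ofBijective Φ' hbij, ?_, ?_⟩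
  · intro i
    show phiHom M (PresentedGroup.of (Sum.inr i : BethGen M)) = _
    erw [phiHom_of]
    rfl
  · intro ed
    show phiHom M (PresentedGroup.of (Sum.inl ed : BethGen M)) = _
    erw [phiHom_of]
    rfl
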